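/- Let K be a commutative ring, let Γ be a finitely generated torsion-free abelian group, and let φ : Γ → ℝ be a group homomorphism. Then the assignment sending r ∈ Λ^K_φ(Γ) to the function s : φ(Γ) → K defined by s(a) = Σ_{γ : φ(γ) = a} r(γ) is well defined (each such sum is finite and s satisfies the Novikov condition on φ(Γ)) and is a ring homomorphism Λ^K_φ(Γ) → Λ^K(φ(Γ)); on monomials it is given by e^γ ↦ e^{φ(γ)}. -/

import Mathlib

/-- The underlying set of the Novikov ring with coefficients in `K`, over an index
type `Γ` weighted by `w : Γ → ℝ`: functions `r : Γ → K` such that for every `c : ℝ`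
only finitely many `γ` with `w γ < c` have `r γ ≠ 0`.  Taking `w = φ` for a group
homomorphism `φ : Γ → ℝ` gives `Λ^K_φ(Γ)`; taking `Γ` an additive subgroup of `ℝ`
and `w` the inclusion gives `Λ^K(Γ)`. -/
def NovikovSet (K : Type*) [Zero K] {Γ : Type*} (w : Γ → ℝ) : Set (Γ → K) :=
  {r | ∀ c : ℝ, {γ : Γ | r γ ≠ 0 ∧ w γ < c}.Finite}

/-- A commutative ring structure on a set `S` of functions `Γ → K` is a Novikov ring
structure if addition is pointwise and multiplication is the convolution product
`(r·s)(γ) = Σ_{α+β=γ} r(α)s(β)`. -/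
def IsNovikovRingStructure {K Γ : Type*} [CommRing K] [AddCommGroup Γ]
    (S : Set (Γ → K)) [CommRing ↥S] : Prop :=
  (∀ a b : ↥S, ∀ γ : Γ, ((a + b : ↥S) : Γ → K) γ = a.1 γ + b.1 γ) ∧
  (∀ a b : ↥S, ∀ γ : Γ, ((a * b : ↥S) : Γ → K) γ = ∑ᶠ α : Γ, a.1 α * b.1 (γ - α))

open Function Set
attribute [local instance] Classical.propDecidable

section NovikovAux
set_option linter.unusedSectionVars false

variable {K Γ : Type*} [CommRing K] [AddCommGroup Γ]

/-- The "delta function" monomial `e^β` lies in every Novikov set. -/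
lemma delta_mem_novikov (w : Γ → ℝ) (β : Γ) :
    (fun γ => if γ = β then (1:K) else 0) ∈ NovikovSet K w := by
  intro c
  apply (Set.finite_singleton β).subset
  rintro γ ⟨h, -⟩
  by_contra hne
  simp only [Set.mem_singleton_iff] at hne
  exact h (if_neg hne)

/-- In a Novikov ring structure, the zero element is the zero function. -/
lemma zero_apply_nov (S : Set (Γ → K)) [CommRing ↥S]
    (h : IsNovikovRingStructure S) (γ : Γ) : ((0 : ↥S) : Γ → K) γ = 0 := by
  have h0 := h.1 0 0 γ
  rw [add_zero] at h0
  exact add_eq_right.mp h0.symm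

/-- In a Novikov ring structure containing all delta functions, the identity element
is the delta function at `0`. -/
lemma one_apply_nov (S : Set (Γ → K)) [CommRing ↥S]
    (h : IsNovikovRingStructure S)
    (hδ : ∀ β : Γ, (fun γ => if γ = β then (1:K) else 0) ∈ S) (γ : Γ) :
    ((1 : ↥S) : Γ → K) γ = if γ = 0 then 1 else 0 := by
  set b : ↥S := ⟨fun γ => if γ = 0 then (1:K) else 0, hδ 0⟩ with hb
  have h1 : (1 * b : ↥S) = b := one_mul b
  have h2 := h.2 1 b γ
  rw [h1] at h2
  have h3 : ∑ᶠ α : Γ, ((1:↥S):Γ→K) α * b.1 (γ - α) = ((1:↥S):Γ→K) γ := by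
    rw [finsum_eq_single _ γ]
    · simp [hb]
    · intro α hα
      have hne : γ - α ≠ 0 := sub_ne_zero.mpr (Ne.symm hα)
      simp [hb, if_neg hne]
  rw [h3] at h2
  simpa [hb] using h2.symm

variable (φ : Γ →+ ℝ)

/-- For a Novikov element, each fiber of `φ` meets the support in a finite set. -/
lemma fiber_finite {r : Γ → K} (hr : r ∈ NovikovSet K ⇑φ) (a : ℝ) :
    ({γ : Γ | φ γ = a} ∩ support r).Finite := by
  apply (hr (a + 1)).subset
  rintro γ ⟨h1, h2⟩
  exact ⟨h2, by rw [h1]; linarith⟩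

/-- `φ` is bounded below on the support of a Novikov element. -/
lemma nov_lb {r : Γ → K} (hr : r ∈ NovikovSet K ⇑φ) :
    ∃ m : ℝ, ∀ γ, r γ ≠ 0 → m ≤ φ γ := by
  obtain ⟨m, hm⟩ := ((hr 0).image (fun γ => φ γ)).bddBelow
  refine ⟨min m 0, fun γ h0 => ?_⟩
  rcases lt_or_ge (φ γ) 0 with h | h
  · exact le_trans (min_le_left _ _) (hm ⟨γ, ⟨h0, h⟩, rfl⟩)
  · exact le_trans (min_le_right _ _) h

/-- The pushforward function `s(a) = Σ_{γ : φ(γ) = a} r(γ)`. -/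
noncomputable def sfun (r : Γ → K) : φ.range → K :=
  fun a => ∑ᶠ γ ∈ {γ : Γ | φ γ = (a : ℝ)}, r γ

/-- The pushforward of a Novikov element satisfies the Novikov condition on `φ(Γ)`. -/
lemma sfun_mem {r : Γ → K} (hr : r ∈ NovikovSet K ⇑φ) :
    sfun φ r ∈ NovikovSet K (fun a : φ.range => (a : ℝ)) := by
  intro c
  apply Set.Finite.of_finite_image (f := fun a : φ.range => (a : ℝ))
  · apply ((hr c).image (fun γ => φ γ)).subset
    rintro x ⟨a, ⟨ha1, ha2⟩, rfl⟩
    obtain ⟨γ, hγmem, hγ⟩ := exists_ne_zero_of_finsum_mem_ne_zero ha1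
    exact ⟨γ, ⟨hγ, by rw [hγmem]; exact ha2⟩, hγmem⟩
  · exact Set.injOn_of_injective Subtype.val_injective

/-- The key computation: the pushforward takes convolution on `Γ` to convolution
on `φ(Γ)`. -/
lemma key_mul {r r' : Γ → K} (hr : r ∈ NovikovSet K ⇑φ) (hr' : r' ∈ NovikovSet K ⇑φ)
    (a : φ.range) :
    ∑ᶠ γ ∈ {γ : Γ | φ γ = (a : ℝ)}, (∑ᶠ α : Γ, r α * r' (γ - α))
      = ∑ᶠ b : φ.range, sfun φ r b * sfun φ r' (a - b) := by
  classical
  obtain ⟨m, hm⟩ := nov_lb φ hr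
  obtain ⟨m', hm'⟩ := nov_lb φ hr'
  set A : ℝ := (a : ℝ) with hA
  have hP : {p : Γ × Γ | r p.1 ≠ 0 ∧ r' p.2 ≠ 0 ∧ φ p.1 + φ p.2 = A}.Finite := by
    apply Set.Finite.subset ((hr (A - m' + 1)).prod (hr' (A - m + 1)))
    rintro ⟨x, y⟩ ⟨hx, hy, hxy⟩
    refine ⟨⟨hx, ?_⟩, ⟨hy, ?_⟩⟩
    · have := hm' y hy; simp only at hxy ⊢; linarith
    · have := hm x hx; simp only at hxy ⊢; linarith
  set Pf := hP.toFinset with hPf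
  have memPf : ∀ p : Γ × Γ, p ∈ Pf ↔ (r p.1 ≠ 0 ∧ r' p.2 ≠ 0 ∧ φ p.1 + φ p.2 = A) := by
    intro p; rw [hPf, Set.Finite.mem_toFinset]; rfl
  set j : Γ → φ.range := fun γ => ⟨φ γ, AddMonoidHom.mem_range.mpr ⟨γ, rfl⟩⟩ with hj
  -- LHS analysis
  have L1 : ∀ γ : Γ, φ γ = A → (∑ᶠ α : Γ, r α * r' (γ - α))
      = ∑ p ∈ Pf.filter (fun p => p.1 + p.2 = γ), r p.1 * r' p.2 := by
    intro γ hγ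
    have hinj : ∀ p ∈ Pf.filter (fun p => p.1 + p.2 = γ),
        ∀ q ∈ Pf.filter (fun p => p.1 + p.2 = γ), p.1 = q.1 → p = q := by
      intro p hp q hq h1
      rw [Finset.mem_filter] at hp hq
      have h2 : p.2 = q.2 := by
        have := hp.2.trans hq.2.symm
        rw [h1] at this
        exact add_left_cancel this
      exact Prod.ext h1 h2
    have e1 : ∑ p ∈ Pf.filter (fun p => p.1 + p.2 = γ), r p.1 * r' p.2
        = ∑ p ∈ Pf.filter (fun p => p.1 + p.2 = γ), r p.1 * r' (γ - p.1) := by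
      refine Finset.sum_congr rfl fun p hp => ?_
      rw [Finset.mem_filter] at hp
      rw [show γ - p.1 = p.2 by rw [← hp.2]; abel]
    rw [e1, ← Finset.sum_image (f := fun α => r α * r' (γ - α)) hinj]
    apply finsum_eq_sum_of_support_subset
    intro α hα
    rw [mem_support] at hα
    have h1 : r α ≠ 0 := fun h => hα (by rw [h, zero_mul])
    have h2 : r' (γ - α) ≠ 0 := fun h => hα (by rw [h, mul_zero])
    have hp : (α, γ - α) ∈ Pf := (memPf _).mpr ⟨h1, h2, by rw [map_sub]; simp [hγ]⟩
    simp only [Finset.coe_image, Set.mem_image]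
    exact ⟨(α, γ - α), Finset.mem_filter.mpr ⟨hp, by simp⟩, rfl⟩
  have L2 : ∑ᶠ γ ∈ {γ : Γ | φ γ = A}, (∑ᶠ α : Γ, r α * r' (γ - α))
      = ∑ γ ∈ Pf.image (fun p => p.1 + p.2), ∑ᶠ α : Γ, r α * r' (γ - α) := by
    apply finsum_mem_eq_sum_of_subset
    · rintro γ ⟨hγA, hγs⟩
      rw [Set.mem_setOf_eq] at hγA
      rw [mem_support] at hγs
      have hex : ∃ α, r α * r' (γ - α) ≠ 0 := by
        by_contra hno
        push_neg at hno
        exact hγs (finsum_eq_zero_of_forall_eq_zero hno)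
      obtain ⟨α, hα⟩ := hex
      have h1 : r α ≠ 0 := fun h => hα (by rw [h, zero_mul])
      have h2 : r' (γ - α) ≠ 0 := fun h => hα (by rw [h, mul_zero])
      have hp : (α, γ - α) ∈ Pf := (memPf _).mpr ⟨h1, h2, by rw [map_sub]; simp [hγA]⟩
      simp only [Finset.coe_image, Set.mem_image]
      exact ⟨(α, γ - α), hp, by simp⟩
    · intro γ hγ
      simp only [Finset.coe_image, Set.mem_image] at hγ
      obtain ⟨p, hp, rfl⟩ := hγ
      have := ((memPf p).mp hp).2.2
      simpa [map_add] using this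
  have hmemim : ∀ γ ∈ Pf.image (fun p : Γ × Γ => p.1 + p.2), φ γ = A := by
    intro γ hγ
    simp only [Finset.mem_image] at hγ
    obtain ⟨p, hp, rfl⟩ := hγ
    simpa [map_add] using ((memPf p).mp hp).2.2
  have L : ∑ᶠ γ ∈ {γ : Γ | φ γ = A}, (∑ᶠ α : Γ, r α * r' (γ - α))
      = ∑ p ∈ Pf, r p.1 * r' p.2 := by
    rw [L2, Finset.sum_congr rfl (fun γ hγ => L1 γ (hmemim γ hγ))]
    exact Finset.sum_fiberwise_of_maps_to (fun p hp => Finset.mem_image_of_mem _ hp) _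
  -- RHS analysis
  have R1 : ∀ b : φ.range, sfun φ r b * sfun φ r' (a - b)
      = ∑ p ∈ Pf.filter (fun p => j p.1 = b), r p.1 * r' p.2 := by
    intro b
    have hb1 := fiber_finite φ hr (b : ℝ)
    have hb2 := fiber_finite φ hr' ((a - b : φ.range) : ℝ)
    rw [sfun, sfun, finsum_mem_eq_sum _ hb1, finsum_mem_eq_sum _ hb2,
      Finset.sum_mul_sum, ← Finset.sum_product']
    apply Finset.sum_congr _ (fun p _ => rfl)
    ext p
    simp only [Finset.mem_product, Set.Finite.mem_toFinset, Set.mem_inter_iff,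
      Set.mem_setOf_eq, mem_support, Finset.mem_filter, memPf]
    have hab : ((a - b : φ.range) : ℝ) = A - (b : ℝ) := by push_cast [hA]; ring
    constructor
    · rintro ⟨⟨hp1, hp1'⟩, ⟨hp2, hp2'⟩⟩
      refine ⟨⟨hp1', hp2', ?_⟩, ?_⟩
      · rw [hp1, hp2, hab]; ring
      · exact Subtype.ext hp1
    · rintro ⟨⟨hp1, hp2, hsum⟩, hjb⟩
      have h1 : φ p.1 = (b : ℝ) := congrArg Subtype.val hjb
      refine ⟨⟨h1, hp1⟩, ⟨?_, hp2⟩⟩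
      rw [hab]; linarith
  have R2 : ∑ᶠ b : φ.range, sfun φ r b * sfun φ r' (a - b)
      = ∑ b ∈ Pf.image (fun p => j p.1), sfun φ r b * sfun φ r' (a - b) := by
    apply finsum_eq_sum_of_support_subset
    intro b hb
    rw [mem_support] at hb
    have h1 : sfun φ r b ≠ 0 := fun h => hb (by rw [h, zero_mul])
    have h2 : sfun φ r' (a - b) ≠ 0 := fun h => hb (by rw [h, mul_zero])
    obtain ⟨γ, hγmem, hγ⟩ := exists_ne_zero_of_finsum_mem_ne_zero h1
    obtain ⟨δ, hδmem, hδ⟩ := exists_ne_zero_of_finsum_mem_ne_zero h2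
    have hab : ((a - b : φ.range) : ℝ) = A - (b : ℝ) := by push_cast [hA]; ring
    have hpair : (γ, δ) ∈ Pf := (memPf _).mpr ⟨hγ, hδ, by
      rw [Set.mem_setOf_eq] at hγmem hδmem
      rw [hγmem, hδmem, hab]; ring⟩
    simp only [Finset.coe_image, Set.mem_image]
    refine ⟨(γ, δ), hpair, Subtype.ext ?_⟩
    rw [Set.mem_setOf_eq] at hγmem
    exact hγmem
  have R : ∑ᶠ b : φ.range, sfun φ r b * sfun φ r' (a - b)
      = ∑ p ∈ Pf, r p.1 * r' p.2 := by
    rw [R2, Finset.sum_congr rfl (fun b _ => R1 b)]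
    exact Finset.sum_fiberwise_of_maps_to (fun p hp => Finset.mem_image_of_mem _ hp) _
  rw [L, R]

end NovikovAux

/-- Let `K` be a commutative ring, `Γ` a finitely generated torsion-free abelian
group and `φ : Γ → ℝ` a group homomorphism.  The assignment sending
`r ∈ Λ^K_φ(Γ)` to the function `s : φ(Γ) → K`, `s(a) = Σ_{γ : φ(γ) = a} r(γ)`, is
well defined — each such sum is finite and `s` satisfies the Novikov condition on
`φ(Γ)` — and it is a ring homomorphism `Λ^K_φ(Γ) → Λ^K(φ(Γ))` (on monomials it is
`e^γ ↦ e^{φ(γ)}`). -/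
theorem novikov_pushforward_ringHom
    (K : Type*) [CommRing K]
    (Γ : Type*) [AddCommGroup Γ] [AddGroup.FG Γ] (hTF : ∀ g : Γ, g ≠ 0 → ¬IsOfFinAddOrder g)
    (φ : Γ →+ ℝ)
    [CommRing ↥(NovikovSet K ⇑φ)]
    (h₁ : IsNovikovRingStructure (NovikovSet K ⇑φ))
    [CommRing ↥(NovikovSet K (fun a : φ.range => (a : ℝ)))]
    (h₂ : IsNovikovRingStructure (NovikovSet K (fun a : φ.range => (a : ℝ)))) :
    (∀ r ∈ NovikovSet K ⇑φ, ∀ a : φ.range,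
        {γ : Γ | r γ ≠ 0 ∧ φ γ = (a : ℝ)}.Finite) ∧
    (∀ r ∈ NovikovSet K ⇑φ,
        (fun a : φ.range => ∑ᶠ γ ∈ {γ : Γ | φ γ = (a : ℝ)}, r γ) ∈
          NovikovSet K (fun a : φ.range => (a : ℝ))) ∧
    ∃ F : ↥(NovikovSet K ⇑φ) →+* ↥(NovikovSet K (fun a : φ.range => (a : ℝ))),
      ∀ (r : ↥(NovikovSet K ⇑φ)) (a : φ.range),
        (F r).1 a = ∑ᶠ γ ∈ {γ : Γ | φ γ = (a : ℝ)}, r.1 γ := by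
  classical
  refine ⟨?_, ?_, ?_⟩
  · intro r hr a
    apply (fiber_finite φ hr (a : ℝ)).subset
    rintro γ ⟨h1, h2⟩
    exact ⟨h2, h1⟩
  · intro r hr
    exact sfun_mem φ hr
  · refine ⟨{ toFun := fun x => ⟨sfun φ x.1, sfun_mem φ x.2⟩
            , map_one' := ?_, map_mul' := ?_, map_zero' := ?_, map_add' := ?_ },
        fun r a => rfl⟩
    · -- map_one
      apply Subtype.ext
      funext a
      show sfun φ ((1 : ↥(NovikovSet K ⇑φ)) : Γ → K) a
          = ((1 : ↥(NovikovSet K (fun a : φ.range => (a : ℝ)))) : φ.range → K) a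
      rw [one_apply_nov _ h₂ (fun β => delta_mem_novikov _ β) a]
      have h1 : ((1 : ↥(NovikovSet K ⇑φ)) : Γ → K)
          = fun γ => if γ = 0 then (1:K) else 0 :=
        funext (one_apply_nov _ h₁ (fun β => delta_mem_novikov _ β))
      rw [sfun, h1]
      by_cases ha : a = 0
      · subst ha
        rw [if_pos rfl]
        have hs1 : {γ : Γ | φ γ = ((0 : φ.range) : ℝ)} ∩
            Function.support (fun γ => if γ = 0 then (1:K) else 0) ⊆ ↑({0} : Finset Γ) := by
          rintro γ ⟨-, hγs⟩
          rw [Function.mem_support] at hγs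
          by_contra hne
          simp only [Finset.coe_singleton, Set.mem_singleton_iff] at hne
          exact hγs (if_neg hne)
        have hs2 : ↑({0} : Finset Γ) ⊆ {γ : Γ | φ γ = ((0 : φ.range) : ℝ)} := by
          intro γ hγ
          simp only [Finset.coe_singleton, Set.mem_singleton_iff] at hγ
          subst hγ
          simp
        rw [finsum_mem_eq_sum_of_subset _ hs1 hs2]
        simp
      · rw [if_neg ha]
        apply finsum_mem_of_eqOn_zero
        intro γ hγ
        rw [Set.mem_setOf_eq] at hγ
        have hne : γ ≠ 0 := by
          intro h
          subst h
          exact ha (Subtype.ext (by simpa using hγ.symm))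
        exact if_neg hne
    · -- map_mul
      intro x y
      apply Subtype.ext
      funext a
      have hL : sfun φ ((x * y : ↥(NovikovSet K ⇑φ)) : Γ → K) a
          = ∑ᶠ b : φ.range, sfun φ x.1 b * sfun φ y.1 (a - b) := by
        rw [sfun, finsum_mem_congr rfl (fun γ _ => h₁.2 x y γ)]
        exact key_mul φ x.2 y.2 a
      show sfun φ ((x * y : ↥(NovikovSet K ⇑φ)) : Γ → K) a = _
      rw [hL, h₂.2]
    · -- map_zero
      apply Subtype.ext
      funext a
      show sfun φ ((0 : ↥(NovikovSet K ⇑φ)) : Γ → K) a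
          = ((0 : ↥(NovikovSet K (fun a : φ.range => (a : ℝ)))) : φ.range → K) a
      rw [zero_apply_nov _ h₂ a, sfun]
      apply finsum_mem_of_eqOn_zero
      intro γ _
      exact zero_apply_nov _ h₁ γ
    · -- map_add
      intro x y
      apply Subtype.ext
      funext a
      have hL : sfun φ ((x + y : ↥(NovikovSet K ⇑φ)) : Γ → K) a
          = sfun φ x.1 a + sfun φ y.1 a := by
        rw [sfun, finsum_mem_congr rfl (fun γ _ => h₁.1 x y γ),
          finsum_mem_add_distrib' (fiber_finite φ x.2 _) (fiber_finite φ y.2 _)]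
        rfl
      show sfun φ ((x + y : ↥(NovikovSet K ⇑φ)) : Γ → K) a = _
      rw [hL, h₂.1]
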